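/- arXiv:2311.11559 — 3 statements merged into one kernel-verified Lean document; each statement's English description precedes it below -/
import Mathlib

section
/- For any C¹ function u on ℝ^m × ℝ^k and (z,σ) ≠ 0 one has ⟨∇_α u, ∇_α ρ_α⟩ = (Z_α u / ρ_α) ψ_α, where ψ_α = |z|^{2α}/ρ_α^{2α}, Z_α u = ⟨z, ∇_z u⟩ + (α+1)⟨σ, ∇_σ u⟩, and ⟨∇_α u, ∇_α v⟩ = ⟨∇_z u, ∇_z v⟩ + (|z|^{2α}/4)⟨∇_σ u, ∇_σ v⟩. -/
open MeasureTheory Real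

noncomputable section

/-- The product space `ℝ^m × ℝ^k`. -/
abbrev E (m k : ℕ) := EuclideanSpace ℝ (Fin m) × EuclideanSpace ℝ (Fin k)

/-- The Baouendi–Grushin pseudo-gauge `ρ_α`. -/
def rho (m k : ℕ) (α : ℝ) (x : E m k) : ℝ :=
  (‖x.1‖ ^ (2 * (α + 1)) + 4 * (α + 1) ^ 2 * ‖x.2‖ ^ 2) ^ (1 / (2 * (α + 1)))

/-- The anisotropic dilations `δ_λ(z,σ) = (λ z, λ^{α+1} σ)`. -/
def dil (m k : ℕ) (α lam : ℝ) (x : E m k) : E m k :=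
  (lam • x.1, (lam ^ (α + 1)) • x.2)

/-- Standard basis vector in the `z`-slot. -/
def ez (m k : ℕ) (i : Fin m) : E m k := (EuclideanSpace.single i 1, 0)

/-- Standard basis vector in the `σ`-slot. -/
def es (m k : ℕ) (j : Fin k) : E m k := (0, EuclideanSpace.single j 1)

/-- The generator `Z_α u = ⟨z, ∇_z u⟩ + (α+1)⟨σ, ∇_σ u⟩`. -/
def Zop (m k : ℕ) (α : ℝ) (u : E m k → ℝ) (x : E m k) : ℝ :=
  fderiv ℝ u x (x.1, (α + 1) • x.2)

/-- `ψ_α = |z|^{2α} / ρ_α^{2α}`. -/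
def psi (m k : ℕ) (α : ℝ) (x : E m k) : ℝ :=
  ‖x.1‖ ^ (2 * α) / rho m k α x ^ (2 * α)

/-- `|∇_z u|²`. -/
def zGradSq (m k : ℕ) (u : E m k → ℝ) (x : E m k) : ℝ :=
  ∑ i : Fin m, (fderiv ℝ u x (ez m k i)) ^ 2

/-- `|∇_σ u|²`. -/
def sGradSq (m k : ℕ) (u : E m k → ℝ) (x : E m k) : ℝ :=
  ∑ j : Fin k, (fderiv ℝ u x (es m k j)) ^ 2

/-- `|∇_α u|² = |∇_z u|² + (|z|^{2α}/4)|∇_σ u|²`. -/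
def alphaGradSq (m k : ℕ) (α : ℝ) (u : E m k → ℝ) (x : E m k) : ℝ :=
  zGradSq m k u x + ‖x.1‖ ^ (2 * α) / 4 * sGradSq m k u x

/-- `⟨∇_α u, ∇_α v⟩ = ⟨∇_z u, ∇_z v⟩ + (|z|^{2α}/4)⟨∇_σ u, ∇_σ v⟩`. -/
def alphaInner (m k : ℕ) (α : ℝ) (u v : E m k → ℝ) (x : E m k) : ℝ :=
  (∑ i : Fin m, fderiv ℝ u x (ez m k i) * fderiv ℝ v x (ez m k i)) +
    ‖x.1‖ ^ (2 * α) / 4 *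
      ∑ j : Fin k, fderiv ℝ u x (es m k j) * fderiv ℝ v x (es m k j)

/-- The Laplacian in the `z`-variables, `Δ_z u`. -/
def lapZ (m k : ℕ) (u : E m k → ℝ) (x : E m k) : ℝ :=
  ∑ i : Fin m, fderiv ℝ (fun y => fderiv ℝ u y (ez m k i)) x (ez m k i)

/-- The Laplacian in the `σ`-variables, `Δ_σ u`. -/
def lapS (m k : ℕ) (u : E m k → ℝ) (x : E m k) : ℝ :=
  ∑ j : Fin k, fderiv ℝ (fun y => fderiv ℝ u y (es m k j)) x (es m k j)

/-- The Baouendi–Grushin operator `B_α u = Δ_z u + (|z|^{2α}/4) Δ_σ u`. -/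
def Bop (m k : ℕ) (α : ℝ) (u : E m k → ℝ) (x : E m k) : ℝ :=
  lapZ m k u x + ‖x.1‖ ^ (2 * α) / 4 * lapS m k u x

/-- The divergence of a vector field on `ℝ^m × ℝ^k`. -/
def divg (m k : ℕ) (V : E m k → E m k) (x : E m k) : ℝ :=
  (∑ i : Fin m, fderiv ℝ (fun y => (V y).1 i) x (ez m k i)) +
    ∑ j : Fin k, fderiv ℝ (fun y => (V y).2 j) x (es m k j)

end

lemma euclid_decomp {n : ℕ} (v : EuclideanSpace ℝ (Fin n)) :
    (∑ i : Fin n, v i • EuclideanSpace.single i (1:ℝ)) = v := by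
  ext l
  rw [WithLp.ofLp_sum, Finset.sum_apply]
  simp [EuclideanSpace.single_apply, PiLp.smul_apply]

set_option maxHeartbeats 1000000 in
theorem alphaInner_rho (m k : ℕ) (hm : 1 ≤ m) (hk : 1 ≤ k) (α : ℝ) (hα : 0 < α)
    (u : E m k → ℝ) (hu : ContDiff ℝ 1 u) (x : E m k) (hx : x ≠ 0) :
    alphaInner m k α u (rho m k α) x = Zop m k α u x / rho m k α x * psi m k α x := by
  classical
  have hα1 : (0:ℝ) < α + 1 := by linarith
  set β : ℝ := 1 / (2 * (α + 1)) with hβ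
  set N : E m k → ℝ := fun y => ((‖y.1‖ ^ 2 : ℝ)) ^ (α + 1) + 4 * (α + 1) ^ 2 * ‖y.2‖ ^ 2
    with hNdef
  have hrho : rho m k α = fun y => (N y) ^ β := by
    funext y
    unfold rho
    rw [show (2 * (α + 1) : ℝ) = (2:ℝ) * (α + 1) from rfl,
      Real.rpow_mul (norm_nonneg _), Real.rpow_two]
  have hN0 : 0 < N x := by
    have t1 : 0 ≤ ((‖x.1‖ ^ 2 : ℝ)) ^ (α + 1) := Real.rpow_nonneg (by positivity) _
    have t2 : 0 ≤ 4 * (α + 1) ^ 2 * ‖x.2‖ ^ 2 := by positivity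
    have hor : x.1 ≠ 0 ∨ x.2 ≠ 0 := by
      by_contra h
      push_neg at h
      exact hx (Prod.ext h.1 h.2)
    rcases hor with h1 | h2
    · have : 0 < ((‖x.1‖ ^ 2 : ℝ)) ^ (α + 1) :=
        Real.rpow_pos_of_pos (pow_pos (norm_pos_iff.2 h1) 2) _
      simp only [hNdef]; linarith
    · have h2' : 0 < ‖x.2‖ ^ 2 := pow_pos (norm_pos_iff.2 h2) 2
      have : 0 < 4 * (α + 1) ^ 2 * ‖x.2‖ ^ 2 := by positivity
      simp only [hNdef]; linarith
  -- derivative maps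
  set D1 : E m k →L[ℝ] ℝ :=
    2 • (innerSL ℝ x.1).comp (ContinuousLinearMap.fst ℝ _ _) with hD1
  set D2 : E m k →L[ℝ] ℝ :=
    2 • (innerSL ℝ x.2).comp (ContinuousLinearMap.snd ℝ _ _) with hD2
  have h1 : HasFDerivAt (fun y : E m k => ‖y.1‖ ^ 2) D1 x := hasFDerivAt_fst.norm_sq
  have h4 : HasFDerivAt (fun y : E m k => ‖y.2‖ ^ 2) D2 x := hasFDerivAt_snd.norm_sq
  have h2 : HasDerivAt (fun t : ℝ => t ^ (α + 1)) ((α + 1) * (‖x.1‖ ^ 2 : ℝ) ^ α) (‖x.1‖ ^ 2) := by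
    have := Real.hasDerivAt_rpow_const (x := (‖x.1‖ ^ 2 : ℝ)) (p := α + 1) (Or.inr (by linarith))
    simpa using this
  have h3 : HasFDerivAt (fun y : E m k => ((‖y.1‖ ^ 2 : ℝ)) ^ (α + 1))
      (((α + 1) * (‖x.1‖ ^ 2 : ℝ) ^ α) • D1) x :=
      HasDerivAt.comp_hasFDerivAt (h₂ := fun t : ℝ => t ^ (α + 1)) (f := fun y : E m k => ‖y.1‖ ^ 2) x h2 h1
  have h5 : HasFDerivAt (fun y : E m k => 4 * (α + 1) ^ 2 * ‖y.2‖ ^ 2)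
      ((4 * (α + 1) ^ 2) • D2) x := h4.const_mul _
  have hN' : HasFDerivAt N
      (((α + 1) * (‖x.1‖ ^ 2 : ℝ) ^ α) • D1 + (4 * (α + 1) ^ 2) • D2) x := h3.add h5
  have houter : HasDerivAt (fun t : ℝ => t ^ β) (β * (N x) ^ (β - 1)) (N x) :=
    Real.hasDerivAt_rpow_const (Or.inl hN0.ne')
  have hρ : HasFDerivAt (rho m k α)
      ((β * (N x) ^ (β - 1)) •
        (((α + 1) * (‖x.1‖ ^ 2 : ℝ) ^ α) • D1 + (4 * (α + 1) ^ 2) • D2)) x := by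
    rw [hrho]
    exact houter.comp_hasFDerivAt x hN'
  set c : ℝ := β * (N x) ^ (β - 1) with hc
  have hez : ∀ i : Fin m, fderiv ℝ (rho m k α) x (ez m k i) =
      c * ((α + 1) * (‖x.1‖ ^ 2 : ℝ) ^ α * (2 * x.1 i)) := by
    intro i
    rw [hρ.fderiv]
    simp [hD1, hD2, ez, EuclideanSpace.inner_single_right, real_inner_comm]
  have hes : ∀ j : Fin k, fderiv ℝ (rho m k α) x (es m k j) =
      c * (4 * (α + 1) ^ 2 * (2 * x.2 j)) := by
    intro j
    rw [hρ.fderiv]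
    simp [hD1, hD2, es, EuclideanSpace.inner_single_right, real_inner_comm]
  set A : ℝ := ∑ i : Fin m, x.1 i * fderiv ℝ u x (ez m k i) with hA
  set B : ℝ := ∑ j : Fin k, x.2 j * fderiv ℝ u x (es m k j) with hB
  -- Zop computation
  have hdecomp : ((x.1, (α + 1) • x.2) : E m k) =
      (∑ i : Fin m, x.1 i • ez m k i) + ∑ j : Fin k, ((α + 1) * x.2 j) • es m k j := by
    apply Prod.ext
    · simp only [Prod.fst_add, Prod.fst_sum, ez, es, Prod.smul_mk, smul_zero,
        Finset.sum_const_zero, add_zero]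
      exact (euclid_decomp x.1).symm
    · simp only [Prod.snd_add, Prod.snd_sum, ez, es, Prod.smul_mk, smul_zero,
        Finset.sum_const_zero, zero_add]
      rw [← euclid_decomp ((α + 1) • x.2)]
      refine Finset.sum_congr rfl fun j _ => ?_
      rw [PiLp.smul_apply, smul_eq_mul]
  have hZ : Zop m k α u x = A + (α + 1) * B := by
    unfold Zop
    rw [hdecomp, map_add, map_sum, map_sum]
    simp only [ContinuousLinearMap.map_smul, smul_eq_mul]
    rw [hA, hB, Finset.mul_sum]
    congr 1
    exact Finset.sum_congr rfl fun j _ => by ring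
  -- final assembly
  have hρx : rho m k α x = (N x) ^ β := by rw [hrho]
  have hw : ‖x.1‖ ^ (2 * α) = ((‖x.1‖ ^ 2 : ℝ)) ^ α := by
    rw [show (2 * α : ℝ) = (2:ℝ) * α from rfl, Real.rpow_mul (norm_nonneg _), Real.rpow_two]
  set q : ℝ := (N x) ^ (1 - β) with hq
  have hq0 : 0 < q := Real.rpow_pos_of_pos hN0 _
  have hP : (N x) ^ (β - 1) = q⁻¹ := by
    rw [hq, show β - 1 = -(1 - β) by ring, Real.rpow_neg hN0.le]
  have hrr : rho m k α x * rho m k α x ^ (2 * α) = q := by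
    rw [hρx, ← Real.rpow_mul hN0.le, ← Real.rpow_add hN0, hq]
    congr 1
    rw [hβ]
    field_simp
    ring
  have hsum1 : (∑ i : Fin m, fderiv ℝ u x (ez m k i) * fderiv ℝ (rho m k α) x (ez m k i)) =
      c * ((α + 1) * (‖x.1‖ ^ 2 : ℝ) ^ α * 2) * A := by
    rw [hA, Finset.mul_sum]
    refine Finset.sum_congr rfl fun i _ => ?_
    rw [hez i]; ring
  have hsum2 : (∑ j : Fin k, fderiv ℝ u x (es m k j) * fderiv ℝ (rho m k α) x (es m k j)) =
      c * (4 * (α + 1) ^ 2 * 2) * B := by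
    rw [hB, Finset.mul_sum]
    refine Finset.sum_congr rfl fun j _ => ?_
    rw [hes j]; ring
  unfold alphaInner psi
  rw [hsum1, hsum2, hZ, hw, hc, hP]
  have hρpos : 0 < rho m k α x := hρx ▸ Real.rpow_pos_of_pos hN0 β
  have hρ2α : rho m k α x ^ (2 * α) = q / rho m k α x := by
    field_simp [hρpos.ne'] at hrr ⊢
    linarith [hrr]
  rw [hρ2α]
  rw [hβ]
  field_simp
end

section
/- For any C¹ function u on ℝ^m × ℝ^k and (z,σ) ≠ 0, the pointwise inequality |∇_α u|² ≥ (Z_α u / ρ_α)² ψ_α holds, where ψ_α = |z|^{2α}/ρ_α^{2α}. -/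
open MeasureTheory Real

section aux

lemma euclidean_sum_single' {n : ℕ} (v : EuclideanSpace ℝ (Fin n)) :
    ∑ i, v i • EuclideanSpace.single i (1:ℝ) = v := by
  ext j
  rw [WithLp.ofLp_sum, Finset.sum_apply]
  simp [EuclideanSpace.single_apply, PiLp.smul_apply]

lemma zop_eq (m k : ℕ) (α : ℝ) (u : E m k → ℝ) (x : E m k) :
    Zop m k α u x = (∑ i, x.1 i * fderiv ℝ u x (ez m k i)) +
      (α + 1) * ∑ j, x.2 j * fderiv ℝ u x (es m k j) := by
  have hdecomp : ((x.1, (α + 1) • x.2) : E m k) =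
      (∑ i, x.1 i • ez m k i) + ∑ j, ((α + 1) * x.2 j) • es m k j := by
    have h1 : (∑ i, x.1 i • ez m k i) =
        ((x.1 : EuclideanSpace ℝ (Fin m)), (0 : EuclideanSpace ℝ (Fin k))) := by
      rw [Prod.ext_iff]
      constructor
      · rw [Prod.fst_sum]
        simpa [ez] using euclidean_sum_single' x.1
      · rw [Prod.snd_sum]
        simp [ez]
    have h2 : (∑ j, ((α + 1) * x.2 j) • es m k j) =
        ((0 : EuclideanSpace ℝ (Fin m)), ((α + 1) • x.2 : EuclideanSpace ℝ (Fin k))) := by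
      rw [Prod.ext_iff]
      constructor
      · rw [Prod.fst_sum]
        simp [es]
      · rw [Prod.snd_sum]
        have : ∀ j, ((α + 1) * x.2 j) • EuclideanSpace.single j (1:ℝ)
            = (α + 1) • (x.2 j • EuclideanSpace.single j (1:ℝ)) := by
          intro j; rw [smul_smul]
        simp only [es, Prod.smul_mk, smul_zero]
        simp only [this]
        rw [← Finset.smul_sum, euclidean_sum_single' x.2]
    rw [h1, h2, Prod.mk_add_mk, add_zero, zero_add]
  rw [Zop, hdecomp, map_add, map_sum, map_sum, Finset.mul_sum]
  congr 1
  · exact Finset.sum_congr rfl fun i _ => by rw [_root_.map_smul, smul_eq_mul]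
  · exact Finset.sum_congr rfl fun j _ => by rw [_root_.map_smul, smul_eq_mul]; ring

end aux

theorem alphaGradSq_ge (m k : ℕ) (hm : 1 ≤ m) (hk : 1 ≤ k) (α : ℝ) (hα : 0 < α)
    (u : E m k → ℝ) (hu : ContDiff ℝ 1 u) (x : E m k) (hx : x ≠ 0) :
    (Zop m k α u x / rho m k α x) ^ 2 * psi m k α x ≤ alphaGradSq m k α u x := by
  classical
  set a : Fin m → ℝ := fun i => fderiv ℝ u x (ez m k i) with ha
  set b : Fin k → ℝ := fun j => fderiv ℝ u x (es m k j) with hb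
  by_cases hz : x.1 = 0
  · have hw : ‖x.1‖ ^ (2 * α) = (0:ℝ) := by
      rw [hz, norm_zero, Real.zero_rpow (by positivity)]
    have : psi m k α x = 0 := by rw [psi, hw, zero_div]
    rw [this, mul_zero, alphaGradSq, hw, zero_div, zero_mul, add_zero, zGradSq]
    positivity
  · -- main case
    have hz1 : (0:ℝ) < ‖x.1‖ := by simpa [norm_pos_iff] using hz
    have ht : (0:ℝ) < α + 1 := by linarith
    set s : ℝ := ‖x.1‖ ^ α with hs_def
    have hs : 0 < s := Real.rpow_pos_of_pos hz1 α
    have hsw : ‖x.1‖ ^ (2 * α) = s ^ 2 := by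
      rw [hs_def, show (2 * α) = α * 2 by ring, Real.rpow_mul hz1.le,
        show ((2:ℝ)) = ((2:ℕ):ℝ) by norm_num, Real.rpow_natCast]
    have hzz : ‖x.1‖ ^ (2 * (α + 1)) = s ^ 2 * ‖x.1‖ ^ 2 := by
      rw [show (2 * (α + 1)) = 2 * α + 2 by ring, Real.rpow_add hz1, hsw,
        show ((2:ℝ)) = ((2:ℕ):ℝ) by norm_num, Real.rpow_natCast]
    set S : ℝ := ‖x.1‖ ^ (2 * (α + 1)) + 4 * (α + 1) ^ 2 * ‖x.2‖ ^ 2 with hS_def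
    have hS : 0 < S := by
      have : (0:ℝ) < ‖x.1‖ ^ (2 * (α + 1)) := Real.rpow_pos_of_pos hz1 _
      nlinarith [sq_nonneg ‖x.2‖, sq_nonneg (α+1)]
    have hρ : rho m k α x = S ^ (1 / (2 * (α + 1))) := rfl
    have hρpos : 0 < rho m k α x := by rw [hρ]; exact Real.rpow_pos_of_pos hS _
    have hρS : rho m k α x ^ 2 * rho m k α x ^ (2 * α) = S := by
      have h2 : rho m k α x ^ (2:ℕ) = rho m k α x ^ ((2:ℝ)) := by
        rw [show ((2:ℝ)) = ((2:ℕ):ℝ) by norm_num, Real.rpow_natCast]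
      rw [h2, ← Real.rpow_add hρpos, hρ, ← Real.rpow_mul hS.le,
        show (1 / (2 * (α + 1)) * (2 + 2 * α)) = 1 by field_simp; ring, Real.rpow_one]
    -- norms as sums
    have hZ2 : ‖x.1‖ ^ 2 = ∑ i, x.1 i ^ 2 := by
      rw [EuclideanSpace.norm_eq, Real.sq_sqrt (by positivity)]
      simp [Real.norm_eq_abs, sq_abs]
    have hS2 : ‖x.2‖ ^ 2 = ∑ j, x.2 j ^ 2 := by
      rw [EuclideanSpace.norm_eq, Real.sq_sqrt (by positivity)]
      simp [Real.norm_eq_abs, sq_abs]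
    -- Cauchy–Schwarz over the sum type
    set F : Fin m ⊕ Fin k → ℝ :=
      Sum.elim (fun i => x.1 i) (fun j => (2 * (α + 1) / s) * x.2 j) with hF
    set G : Fin m ⊕ Fin k → ℝ := Sum.elim a (fun j => (s / 2) * b j) with hG
    have hCS := Finset.sum_mul_sq_le_sq_mul_sq Finset.univ F G
    rw [Fintype.sum_sum_type (fun y => F y * G y),
      Fintype.sum_sum_type (fun y => F y ^ 2), Fintype.sum_sum_type (fun y => G y ^ 2)] at hCS
    simp only [hF, hG, Sum.elim_inl, Sum.elim_inr] at hCS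
    have e1 : ∑ j, ((2 * (α + 1) / s) * x.2 j) * ((s / 2) * b j)
        = (α + 1) * ∑ j, x.2 j * b j := by
      rw [Finset.mul_sum]
      refine Finset.sum_congr rfl fun j _ => ?_
      field_simp
    have e2 : ∑ j, ((2 * (α + 1) / s) * x.2 j) ^ 2
        = 4 * (α + 1) ^ 2 / s ^ 2 * ∑ j, x.2 j ^ 2 := by
      rw [Finset.mul_sum]
      refine Finset.sum_congr rfl fun j _ => ?_
      field_simp
      ring
    have e3 : ∑ j, ((s / 2) * b j) ^ 2 = s ^ 2 / 4 * ∑ j, b j ^ 2 := by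
      rw [Finset.mul_sum]
      refine Finset.sum_congr rfl fun j _ => ?_
      ring
    rw [e1, e2, e3] at hCS
    have hZeq : Zop m k α u x = (∑ i, x.1 i * a i) + (α + 1) * ∑ j, x.2 j * b j :=
      zop_eq m k α u x
    set A : ℝ := ∑ i, a i ^ 2 with hA
    set B : ℝ := ∑ j, b j ^ 2 with hB
    have hAG : alphaGradSq m k α u x = A + s ^ 2 / 4 * B := by
      rw [alphaGradSq, hsw, zGradSq, sGradSq]
    have hSeq : S = s ^ 2 * (∑ i, x.1 i ^ 2) + 4 * (α + 1) ^ 2 * (∑ j, x.2 j ^ 2) := by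
      rw [hS_def, hzz, hZ2, hS2]
    -- multiply CS by s^2
    have hCS2 : Zop m k α u x ^ 2 * s ^ 2 ≤ S * (A + s ^ 2 / 4 * B) := by
      have h5 := mul_le_mul_of_nonneg_right hCS (sq_nonneg s)
      rw [← hZeq] at h5
      calc Zop m k α u x ^ 2 * s ^ 2
          ≤ ((∑ i, x.1 i ^ 2) + 4 * (α + 1) ^ 2 / s ^ 2 * ∑ j, x.2 j ^ 2)
              * (A + s ^ 2 / 4 * B) * s ^ 2 := h5
        _ = S * (A + s ^ 2 / 4 * B) := by
            rw [hSeq]; field_simp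
    -- finish
    rw [psi, hsw, hAG, div_pow, div_mul_div_comm, ← Real.rpow_natCast (rho m k α x) 2]
    rw [Real.rpow_natCast]
    rw [div_le_iff₀ (by positivity : (0:ℝ) < rho m k α x ^ 2 * rho m k α x ^ (2*α)), hρS]
    calc Zop m k α u x ^ 2 * s ^ 2 ≤ S * (A + s ^ 2 / 4 * B) := hCS2
      _ = (A + s ^ 2 / 4 * B) * S := by ring
end

section
/- Away from the subspace {0} × ℝ^k, the function Γ_α(z,σ) = ρ_α(z,σ)^{2−Q_α} satisfies B_α Γ_α = 0, where B_α = Δ_z + (|z|^{2α}/4)Δ_σ, ρ_α(z,σ) = (|z|^{2(α+1)} + 4(α+1)²|σ|²)^{1/(2(α+1))} and Q_α = m + (α+1)k. -/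
open MeasureTheory Real

noncomputable section Aux

namespace FSH

open ContinuousLinearMap

lemma rpow_two_mul (x : ℝ) (hx : 0 ≤ x) (z : ℝ) : x ^ (2 * z) = (x ^ 2 : ℝ) ^ z := by
  rw [← Real.rpow_natCast x 2, ← Real.rpow_mul hx]
  norm_num

/-- derivative CLM of `y ↦ ‖y.1‖²`. -/
def LA (m k : ℕ) (y : E m k) : E m k →L[ℝ] ℝ :=
  2 • ((innerSL ℝ y.1).comp (ContinuousLinearMap.fst ℝ (EuclideanSpace ℝ (Fin m)) (EuclideanSpace ℝ (Fin k))))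

/-- derivative CLM of `y ↦ ‖y.2‖²`. -/
def LB (m k : ℕ) (y : E m k) : E m k →L[ℝ] ℝ :=
  2 • ((innerSL ℝ y.2).comp (ContinuousLinearMap.snd ℝ (EuclideanSpace ℝ (Fin m)) (EuclideanSpace ℝ (Fin k))))

lemma LA_ez (m k : ℕ) (y : E m k) (i : Fin m) : LA m k y (ez m k i) = 2 * y.1 i := by
  simp [LA, ez, EuclideanSpace.inner_single_right]

lemma LA_es (m k : ℕ) (y : E m k) (j : Fin k) : LA m k y (es m k j) = 0 := by
  simp [LA, es]

lemma LB_ez (m k : ℕ) (y : E m k) (i : Fin m) : LB m k y (ez m k i) = 0 := by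
  simp [LB, ez]

lemma LB_es (m k : ℕ) (y : E m k) (j : Fin k) : LB m k y (es m k j) = 2 * y.2 j := by
  simp [LB, es, EuclideanSpace.inner_single_right]

lemma hasFDerivAt_A (m k : ℕ) (y : E m k) :
    HasFDerivAt (fun y : E m k => (‖y.1‖ ^ 2 : ℝ)) (LA m k y) y :=
  hasFDerivAt_fst.norm_sq

lemma hasFDerivAt_B (m k : ℕ) (y : E m k) :
    HasFDerivAt (fun y : E m k => (‖y.2‖ ^ 2 : ℝ)) (LB m k y) y :=
  hasFDerivAt_snd.norm_sq

/-- `g(y) = (‖y.1‖²)^{α+1} + 4(α+1)²‖y.2‖²`. -/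
def gf (m k : ℕ) (α : ℝ) (y : E m k) : ℝ :=
  (‖y.1‖ ^ 2 : ℝ) ^ (α + 1) + 4 * (α + 1) ^ 2 * ‖y.2‖ ^ 2

/-- derivative CLM of `gf`. -/
def Lg (m k : ℕ) (α : ℝ) (y : E m k) : E m k →L[ℝ] ℝ :=
  ((α + 1) * (‖y.1‖ ^ 2 : ℝ) ^ α) • LA m k y + (4 * (α + 1) ^ 2) • LB m k y

lemma Lg_ez (m k : ℕ) (α : ℝ) (y : E m k) (i : Fin m) :
    Lg m k α y (ez m k i) = (α + 1) * (‖y.1‖ ^ 2 : ℝ) ^ α * (2 * y.1 i) := by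
  simp [Lg, LA_ez, LB_ez]

lemma Lg_es (m k : ℕ) (α : ℝ) (y : E m k) (j : Fin k) :
    Lg m k α y (es m k j) = 4 * (α + 1) ^ 2 * (2 * y.2 j) := by
  simp [Lg, LA_es, LB_es]

lemma A_pos {m k : ℕ} {y : E m k} (hy : y.1 ≠ 0) : (0 : ℝ) < ‖y.1‖ ^ 2 :=
  pow_pos (norm_pos_iff.mpr hy) 2

lemma gf_pos {m k : ℕ} (α : ℝ) {y : E m k} (hy : y.1 ≠ 0) : 0 < gf m k α y := by
  have h1 : (0:ℝ) < (‖y.1‖ ^ 2 : ℝ) ^ (α + 1) := Real.rpow_pos_of_pos (A_pos hy) _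
  have h2 : (0:ℝ) ≤ 4 * (α + 1) ^ 2 * ‖y.2‖ ^ 2 := by positivity
  unfold gf; linarith

lemma hasFDerivAt_Apow (m k : ℕ) (q : ℝ) {y : E m k} (hy : y.1 ≠ 0) :
    HasFDerivAt (fun z : E m k => (‖z.1‖ ^ 2 : ℝ) ^ q)
      ((q * (‖y.1‖ ^ 2 : ℝ) ^ (q - 1)) • LA m k y) y :=
  by
    have h := (Real.hasDerivAt_rpow_const (x := ‖y.1‖ ^ 2) (p := q) (Or.inl (A_pos hy).ne')).comp_hasFDerivAt y (hasFDerivAt_A m k y)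
    exact h

lemma hasFDerivAt_gf (m k : ℕ) (α : ℝ) {y : E m k} (hy : y.1 ≠ 0) :
    HasFDerivAt (gf m k α) (Lg m k α y) y := by
  have h1 := hasFDerivAt_Apow m k (α + 1) hy
  have h2 := (hasFDerivAt_B m k y).const_mul (4 * (α + 1) ^ 2)
  have h3 := h1.add h2
  simp only [add_sub_cancel_right] at h3
  exact h3

lemma hasFDerivAt_gfpow (m k : ℕ) (α q : ℝ) {y : E m k} (hy : y.1 ≠ 0) :
    HasFDerivAt (fun z => gf m k α z ^ q)
      ((q * gf m k α y ^ (q - 1)) • Lg m k α y) y :=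
  (Real.hasDerivAt_rpow_const (Or.inl (gf_pos α hy).ne')).comp_hasFDerivAt y
    (hasFDerivAt_gf m k α hy)

/-- coordinate CLM in the z slot -/
def CZ (m k : ℕ) (i : Fin m) : E m k →L[ℝ] ℝ :=
  (EuclideanSpace.proj i).comp (ContinuousLinearMap.fst ℝ _ _)

def CS (m k : ℕ) (j : Fin k) : E m k →L[ℝ] ℝ :=
  (EuclideanSpace.proj j).comp (ContinuousLinearMap.snd ℝ _ _)

lemma hasFDerivAt_coordZ (m k : ℕ) (i : Fin m) (y : E m k) :
    HasFDerivAt (fun z : E m k => z.1 i) (CZ m k i) y :=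
  (CZ m k i).hasFDerivAt

lemma hasFDerivAt_coordS (m k : ℕ) (j : Fin k) (y : E m k) :
    HasFDerivAt (fun z : E m k => z.2 j) (CS m k j) y :=
  (CS m k j).hasFDerivAt

lemma CZ_ez (m k : ℕ) (i : Fin m) : CZ m k i (ez m k i) = 1 := by
  simp [CZ, ez, EuclideanSpace.single_apply]

lemma CS_es (m k : ℕ) (j : Fin k) : CS m k j (es m k j) = 1 := by
  simp [CS, es, EuclideanSpace.single_apply]

lemma fderiv_uf_ez (m k : ℕ) (α p : ℝ) {y : E m k} (hy : y.1 ≠ 0) (i : Fin m) :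
    fderiv ℝ (fun z => gf m k α z ^ p) y (ez m k i) =
      2 * (α + 1) * p * (gf m k α y ^ (p - 1) * ((‖y.1‖ ^ 2 : ℝ) ^ α * y.1 i)) := by
  rw [(hasFDerivAt_gfpow m k α p hy).fderiv]
  simp [Lg_ez]
  ring

lemma fderiv_uf_es (m k : ℕ) (α p : ℝ) {y : E m k} (hy : y.1 ≠ 0) (j : Fin k) :
    fderiv ℝ (fun z => gf m k α z ^ p) y (es m k j) =
      8 * (α + 1) ^ 2 * p * (gf m k α y ^ (p - 1) * y.2 j) := by
  rw [(hasFDerivAt_gfpow m k α p hy).fderiv]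
  simp [Lg_es]
  ring

lemma mem_nhds_ne (m k : ℕ) {x : E m k} (hx : x.1 ≠ 0) :
    {y : E m k | y.1 ≠ 0} ∈ nhds x := by
  have : IsOpen {y : E m k | y.1 ≠ 0} := isOpen_compl_singleton.preimage continuous_fst
  exact this.mem_nhds hx

lemma second_z (m k : ℕ) (α p : ℝ) {x : E m k} (hx : x.1 ≠ 0) (i : Fin m) :
    fderiv ℝ (fun y => fderiv ℝ (fun z => gf m k α z ^ p) y (ez m k i)) x (ez m k i) =
      2 * (α + 1) * p * gf m k α x ^ (p - 1) * (‖x.1‖ ^ 2 : ℝ) ^ α +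
      (2 * (α + 1) * p *
        (2 * α * gf m k α x ^ (p - 1) * (‖x.1‖ ^ 2 : ℝ) ^ (α - 1) +
         2 * (α + 1) * (p - 1) * gf m k α x ^ (p - 1 - 1) *
           ((‖x.1‖ ^ 2 : ℝ) ^ α * (‖x.1‖ ^ 2 : ℝ) ^ α))) * x.1 i ^ 2 := by
  have hev : (fun y => fderiv ℝ (fun z => gf m k α z ^ p) y (ez m k i)) =ᶠ[nhds x]
      (fun y => 2 * (α + 1) * p *
        (gf m k α y ^ (p - 1) * ((‖y.1‖ ^ 2 : ℝ) ^ α * y.1 i))) := by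
    filter_upwards [mem_nhds_ne m k hx] with y hy
    exact fderiv_uf_ez m k α p hy i
  rw [hev.fderiv_eq]
  have H := (((hasFDerivAt_gfpow m k α (p - 1) hx).mul
      ((hasFDerivAt_Apow m k α hx).mul (hasFDerivAt_coordZ m k i x))).const_mul
      (2 * (α + 1) * p))
  have H' : HasFDerivAt (fun y => 2 * (α + 1) * p *
      (gf m k α y ^ (p - 1) * ((‖y.1‖ ^ 2 : ℝ) ^ α * y.1 i))) _ x := H
  rw [H'.fderiv]
  simp [Lg_ez, LA_ez, CZ_ez]
  ring

lemma second_s (m k : ℕ) (α p : ℝ) {x : E m k} (hx : x.1 ≠ 0) (j : Fin k) :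
    fderiv ℝ (fun y => fderiv ℝ (fun z => gf m k α z ^ p) y (es m k j)) x (es m k j) =
      8 * (α + 1) ^ 2 * p * gf m k α x ^ (p - 1) +
      (64 * (α + 1) ^ 4 * p * (p - 1) * gf m k α x ^ (p - 1 - 1)) * x.2 j ^ 2 := by
  have hev : (fun y => fderiv ℝ (fun z => gf m k α z ^ p) y (es m k j)) =ᶠ[nhds x]
      (fun y => 8 * (α + 1) ^ 2 * p * (gf m k α y ^ (p - 1) * y.2 j)) := by
    filter_upwards [mem_nhds_ne m k hx] with y hy
    exact fderiv_uf_es m k α p hy j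
  rw [hev.fderiv_eq]
  have H := (((hasFDerivAt_gfpow m k α (p - 1) hx).mul
      (hasFDerivAt_coordS m k j x)).const_mul (8 * (α + 1) ^ 2 * p))
  have H' : HasFDerivAt (fun y => 8 * (α + 1) ^ 2 * p * (gf m k α y ^ (p - 1) * y.2 j)) _ x := H
  rw [H'.fderiv]
  simp [Lg_es, CS_es]
  ring

lemma norm_sq_sum {n : ℕ} (v : EuclideanSpace ℝ (Fin n)) :
    ∑ i : Fin n, v i ^ 2 = ‖v‖ ^ 2 := by
  rw [EuclideanSpace.norm_eq, Real.sq_sqrt (by positivity)]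
  simp [Real.norm_eq_abs, sq_abs]

end FSH

end Aux

theorem fundamental_solution_harmonic (m k : ℕ) (hm : 1 ≤ m) (hk : 1 ≤ k)
    (α : ℝ) (hα : 0 < α) (hQ : 2 < (m : ℝ) + (α + 1) * k)
    (x : E m k) (hx : x.1 ≠ 0) :
    Bop m k α (fun y => rho m k α y ^ (2 - ((m : ℝ) + (α + 1) * k))) x = 0 := by
  have hα1 : (0:ℝ) < α + 1 := by linarith
  set Q : ℝ := (m : ℝ) + (α + 1) * k with hQdef
  set p : ℝ := (2 - Q) / (2 * (α + 1)) with hpdef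
  -- the function equals gf ^ p
  have hfun : (fun y : E m k => rho m k α y ^ (2 - Q)) = fun y => FSH.gf m k α y ^ p := by
    funext y
    have h2 : ‖y.1‖ ^ (2 * (α + 1)) = (‖y.1‖ ^ 2 : ℝ) ^ (α + 1) :=
      FSH.rpow_two_mul _ (norm_nonneg _) _
    have hg0 : 0 ≤ FSH.gf m k α y := by
      have : (0:ℝ) ≤ (‖y.1‖ ^ 2 : ℝ) ^ (α + 1) := Real.rpow_nonneg (by positivity) _
      have h2' : (0:ℝ) ≤ 4 * (α + 1) ^ 2 * ‖y.2‖ ^ 2 := by positivity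
      unfold FSH.gf; linarith
    have : rho m k α y = FSH.gf m k α y ^ (1 / (2 * (α + 1))) := by
      rw [rho, h2]; rfl
    rw [this, ← Real.rpow_mul hg0]
    congr 1
    rw [hpdef]
    field_simp
    try ring
  rw [hfun]
  simp only [Bop, lapZ, lapS]
  set A : ℝ := (‖x.1‖ ^ 2 : ℝ) with hA
  set B : ℝ := (‖x.2‖ ^ 2 : ℝ) with hB
  set G1 : ℝ := FSH.gf m k α x ^ (p - 1) with hG1
  set G2 : ℝ := FSH.gf m k α x ^ (p - 1 - 1) with hG2
  set Aα : ℝ := A ^ α with hAα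
  set Aα1 : ℝ := A ^ (α - 1) with hAα1
  have hApos : (0:ℝ) < A := FSH.A_pos hx
  have hgpos := FSH.gf_pos (m := m) (k := k) α hx
  -- sums
  have hz : ∑ i : Fin m, fderiv ℝ (fun y => fderiv ℝ (fun z => FSH.gf m k α z ^ p) y (ez m k i)) x (ez m k i)
      = m * (2 * (α + 1) * p * G1 * Aα) +
        (2 * (α + 1) * p * (2 * α * G1 * Aα1 + 2 * (α + 1) * (p - 1) * G2 * (Aα * Aα))) * A := by
    rw [Finset.sum_congr rfl fun i _ => FSH.second_z m k α p hx i]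
    rw [Finset.sum_add_distrib, Finset.sum_const, ← Finset.mul_sum, FSH.norm_sq_sum]
    simp [hA, hG1, hG2, hAα, hAα1]
    try ring
  have hs : ∑ j : Fin k, fderiv ℝ (fun y => fderiv ℝ (fun z => FSH.gf m k α z ^ p) y (es m k j)) x (es m k j)
      = k * (8 * (α + 1) ^ 2 * p * G1) + (64 * (α + 1) ^ 4 * p * (p - 1) * G2) * B := by
    rw [Finset.sum_congr rfl fun j _ => FSH.second_s m k α p hx j]
    rw [Finset.sum_add_distrib, Finset.sum_const, ← Finset.mul_sum, FSH.norm_sq_sum]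
    simp [hB, hG1, hG2]
    try ring
  rw [hz, hs]
  have hnorm : ‖x.1‖ ^ (2 * α) = Aα := by
    rw [FSH.rpow_two_mul _ (norm_nonneg _) α, hAα, hA]
  rw [hnorm]
  -- the algebraic identities
  have r1 : Aα1 * A = Aα := by
    rw [hAα1, hAα, ← Real.rpow_add_one hApos.ne' (α - 1), sub_add_cancel]
  have r2 : Aα * A = A ^ (α + 1) := by
    rw [hAα, ← Real.rpow_add_one hApos.ne' α]
  have r3 : G2 * (A ^ (α + 1) + 4 * (α + 1) ^ 2 * B) = G1 := by
    have : (A ^ (α + 1) + 4 * (α + 1) ^ 2 * B) = FSH.gf m k α x := by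
      rw [FSH.gf, hA, hB]
    rw [this, hG2, hG1, ← Real.rpow_add_one hgpos.ne' (p - 1 - 1), sub_add_cancel]
  have r4 : p * (2 * (α + 1)) = 2 - Q := by
    rw [hpdef]; field_simp
  linear_combination (4 * α * (α + 1) * p * G1) * r1 +
    (4 * (α + 1) ^ 2 * p * (p - 1) * G2 * Aα) * r2 +
    (4 * (α + 1) ^ 2 * p * (p - 1) * Aα) * r3 +
    (2 * (α + 1) * p * Aα * G1) * r4
end
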